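/- Liouville's formula: if Φ̇(t) = M(t)Φ(t) with Φ(t₀) = I and M continuous, then det Φ(t) = exp(∫_{t₀}^t tr M(s) ds) for all t in the interval. -/

import Mathlib

open Set Matrix

noncomputable def detCM (N : ℕ) : ContinuousMultilinearMap ℝ (fun _ : Fin N => (Fin N → ℝ)) ℝ :=
  MultilinearMap.mkContinuous
    ((Matrix.detRowAlternating : (Fin N → ℝ) [⋀^Fin N]→ₗ[ℝ] ℝ).toMultilinearMap)
    (N.factorial : ℝ) (by
      intro m
      show ‖(Matrix.of m).det‖ ≤ _
      rw [Matrix.det_apply]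
      calc ‖∑ σ : Equiv.Perm (Fin N), Equiv.Perm.sign σ • ∏ i, Matrix.of m (σ i) i‖
          ≤ ∑ σ : Equiv.Perm (Fin N), ‖Equiv.Perm.sign σ • ∏ i, Matrix.of m (σ i) i‖ :=
            norm_sum_le _ _
        _ ≤ ∑ σ : Equiv.Perm (Fin N), ∏ i, ‖m i‖ := by
            refine Finset.sum_le_sum fun σ _ => ?_
            have h1 : ‖Equiv.Perm.sign σ • ∏ i, Matrix.of m (σ i) i‖
                = ‖∏ i, m (σ i) i‖ := by
              rcases Int.units_eq_one_or (Equiv.Perm.sign σ) with h | h <;>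
                simp [h, Units.smul_def]
            rw [h1, norm_prod]
            calc ∏ i, ‖m (σ i) i‖ ≤ ∏ i, ‖m (σ i)‖ :=
                  Finset.prod_le_prod (fun i _ => norm_nonneg _)
                    (fun i _ => norm_le_pi_norm (m (σ i)) i)
              _ = ∏ i, ‖m i‖ := Equiv.prod_comp σ (fun k => ‖m k‖)
        _ = (N.factorial : ℝ) * ∏ i, ‖m i‖ := by
            rw [Finset.sum_const, Finset.card_univ, Fintype.card_perm, Fintype.card_fin,
              nsmul_eq_mul])

lemma detCM_apply {N : ℕ} (m : Fin N → Fin N → ℝ) : detCM N m = (Matrix.of m).det := by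
  show ((Matrix.detRowAlternating : (Fin N → ℝ) [⋀^Fin N]→ₗ[ℝ] ℝ).toMultilinearMap.mkContinuous _ _) m = _
  rw [MultilinearMap.coe_mkContinuous]
  rfl

lemma hasDerivAt_det {N : ℕ} (Φ : ℝ → Matrix (Fin N) (Fin N) ℝ)
    (A : Matrix (Fin N) (Fin N) ℝ) (t : ℝ)
    (h : ∀ i, HasDerivAt (fun s => Φ s i) (A i) t) :
    HasDerivAt (fun s => (Φ s).det) (∑ i, ((Φ t).updateRow i (A i)).det) t := by
  have hF : ∀ i, HasFDerivAt (fun s => Φ s i)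
      (ContinuousLinearMap.smulRight (1 : ℝ →L[ℝ] ℝ) (A i)) t :=
    fun i => hasDerivAt_iff_hasFDerivAt.mp (h i)
  have H := HasFDerivAt.multilinear_comp (detCM N) hF
  have H2 := H.hasDerivAt
  have heq : (fun s => (Φ s).det) = (fun x => (detCM N) fun i => Φ x i) := by
    funext s; exact (detCM_apply _).symm
  rw [heq]
  convert H2 using 1
  · rfl
  · rfl
  rw [ContinuousLinearMap.sum_apply]
  refine Finset.sum_congr rfl fun i _ => ?_
  simp [detCM_apply, Matrix.updateRow]

lemma sum_det_updateRow {N : ℕ} (M Φ : Matrix (Fin N) (Fin N) ℝ) :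
    ∑ i, (Φ.updateRow i ((M * Φ) i)).det = Matrix.trace M * Φ.det := by
  have h : ∀ i : Fin N, (M * Φ) i = ∑ k, M i k • Φ k := by
    intro i; funext j
    simp [Matrix.mul_apply, Finset.sum_apply]
  simp_rw [h, Matrix.det_updateRow_sum, Matrix.trace, Matrix.diag, smul_eq_mul,
    Finset.sum_mul]

open intervalIntegral MeasureTheory

/-- Liouville's formula: if `Φ̇(t) = M(t)Φ(t)` with `Φ(t₀) = I` and `M` continuous, then
`det Φ(t) = exp (∫_{t₀}^t tr M(s) ds)`. -/
theorem liouville_formula {N : ℕ}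
    (t₀ t₁ : ℝ) (ht : t₀ ≤ t₁)
    (M : ℝ → Matrix (Fin N) (Fin N) ℝ)
    (hM : ∀ i j, ContinuousOn (fun t => M t i j) (Icc t₀ t₁))
    (Φ : ℝ → Matrix (Fin N) (Fin N) ℝ)
    (hode : ∀ t ∈ Icc t₀ t₁, ∀ i j,
      HasDerivAt (fun s => Φ s i j) ((M t * Φ t) i j) t)
    (hinit : Φ t₀ = 1) :
    ∀ t ∈ Icc t₀ t₁,
      (Φ t).det = Real.exp (∫ s in t₀..t, Matrix.trace (M s)) := by
  set f : ℝ → ℝ := fun s => Matrix.trace (M s) with hf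
  have ftr : ContinuousOn f (Icc t₀ t₁) := by
    apply continuousOn_finset_sum
    exact fun i _ => hM i i
  set I : ℝ → ℝ := fun u => ∫ s in t₀..u, f s with hI
  -- derivative of the determinant
  have hdet : ∀ t ∈ Icc t₀ t₁,
      HasDerivAt (fun u => (Φ u).det) (f t * (Φ t).det) t := by
    intro t htt
    have := hasDerivAt_det Φ (M t * Φ t) t (fun i =>
      hasDerivAt_pi.mpr (fun j => hode t htt i j))
    rwa [sum_det_updateRow] at this
  -- continuity of g
  have hIcont : ContinuousOn I (Icc t₀ t₁) := by
    rw [← uIcc_of_le ht]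
    refine continuousOn_primitive_interval ?_
    rw [uIcc_of_le ht]
    exact ftr.integrableOn_Icc
  set g : ℝ → ℝ := fun u => (Φ u).det * Real.exp (-(I u)) with hg
  have hgcont : ContinuousOn g (Icc t₀ t₁) := by
    apply ContinuousOn.mul
    · exact fun x hx => ((hdet x hx).continuousAt).continuousWithinAt
    · exact (Real.continuous_exp.comp_continuousOn hIcont.neg)
  have hgderiv : ∀ x ∈ Ico t₀ t₁, HasDerivWithinAt g 0 (Ici x) x := by
    intro x hx
    have hxI : x ∈ Icc t₀ t₁ := Ico_subset_Icc_self hx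
    have hmem : Icc t₀ t₁ ∈ nhdsWithin x (Ici x) :=
      mem_nhdsWithin.mpr ⟨Iio t₁, isOpen_Iio, hx.2,
        fun y ⟨h1, h2⟩ => ⟨le_trans hx.1 h2, le_of_lt h1⟩⟩
    have hIder : HasDerivWithinAt I (f x) (Ici x) x := by
      apply integral_hasDerivWithinAt_right (t := Ioi x)
      · apply ContinuousOn.intervalIntegrable
        rw [uIcc_of_le hx.1]
        exact ftr.mono (Icc_subset_Icc le_rfl hxI.2)
      · refine ⟨Icc x t₁, mem_nhdsWithin.mpr ⟨Iio t₁, isOpen_Iio, hx.2,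
          fun y ⟨h1, h2⟩ => ⟨le_of_lt h2, le_of_lt h1⟩⟩, ?_⟩
        exact ((ftr.mono (Icc_subset_Icc hx.1 le_rfl)).aestronglyMeasurable
          measurableSet_Icc)
      · exact (ftr x hxI).mono_of_mem_nhdsWithin (mem_nhdsWithin.mpr
          ⟨Iio t₁, isOpen_Iio, hx.2, fun y ⟨h1, h2⟩ => ⟨le_trans hx.1 (le_of_lt h2), le_of_lt h1⟩⟩)
    have hexp : HasDerivWithinAt (fun u => Real.exp (-(I u)))
        (Real.exp (-(I x)) * (-(f x))) (Ici x) x := hIder.neg.exp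
    have := ((hdet x hxI).hasDerivWithinAt.mul hexp)
    convert this using 1
    · rfl
    · rfl
    · rfl
    ring
  have hconst := constant_of_has_deriv_right_zero hgcont hgderiv
  intro t htt
  have h1 : g t = g t₀ := hconst t htt
  have h2 : g t₀ = 1 := by
    simp [hg, hI, hinit, intervalIntegral.integral_same]
  rw [h2] at h1
  have h3 : (Φ t).det * (Real.exp (I t))⁻¹ = 1 := by
    rw [← Real.exp_neg]; exact h1
  rw [mul_inv_eq_one₀ (Real.exp_ne_zero _)] at h3
  exact h3
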